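/- For every natural number n ≥ 2, the set of 5-tuples (a,b,c,d,e) ∈ ℕ⁵ satisfying 4n·a + 2n·b + (2n+1)·c + 2·d + e = 2n + 2 has exactly n + 5 elements. -/
import Mathlib


theorem statement10 (n : ℕ) (hn : 2 ≤ n) :
    {t : ℕ × ℕ × ℕ × ℕ × ℕ |
        4 * n * t.1 + 2 * n * t.2.1 + (2 * n + 1) * t.2.2.1 + 2 * t.2.2.2.1 + t.2.2.2.2
          = 2 * n + 2}.ncard = n + 5 := by
  classical
  set F : Finset (ℕ × ℕ × ℕ × ℕ × ℕ) :=
    ((Finset.range (n + 2)).image fun d => ((0 : ℕ), (0 : ℕ), (0 : ℕ), d, 2 * n + 2 - 2 * d)) ∪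
      {(0, 0, 1, 0, 1), (0, 1, 0, 0, 2), (0, 1, 0, 1, 0)} with hF
  have hset : {t : ℕ × ℕ × ℕ × ℕ × ℕ |
        4 * n * t.1 + 2 * n * t.2.1 + (2 * n + 1) * t.2.2.1 + 2 * t.2.2.2.1 + t.2.2.2.2
          = 2 * n + 2} = ↑F := by
    ext ⟨a, b, c, d, e⟩
    simp only [hF, Set.mem_setOf_eq, Finset.coe_union, Finset.coe_image, Finset.coe_range,
      Set.mem_union, Set.mem_image, Set.mem_Iio, Finset.coe_insert, Set.mem_insert_iff,
      Finset.coe_singleton, Set.mem_singleton_iff, Prod.mk.injEq]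
    constructor
    · intro h
      have ha : a = 0 := by
        by_contra ha
        have : 4 * n ≤ 4 * n * a := Nat.le_mul_of_pos_right _ (Nat.pos_of_ne_zero ha)
        omega
      subst ha
      have hb : b ≤ 1 := by
        by_contra hb
        have : 2 * n * 2 ≤ 2 * n * b := Nat.mul_le_mul_left _ (by omega)
        omega
      have hc : c ≤ 1 := by
        by_contra hc
        have : (2 * n + 1) * 2 ≤ (2 * n + 1) * c := Nat.mul_le_mul_left _ (by omega)
        omega
      interval_cases b <;> interval_cases c
      · left; exact ⟨d, by omega, by omega⟩
      · right; omega
      · right; omega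
      · omega
    · rintro (⟨d', hd', rfl, rfl, rfl, rfl, rfl⟩ | ⟨rfl, rfl, rfl, rfl, rfl⟩ |
        ⟨rfl, rfl, rfl, rfl, rfl⟩ | ⟨rfl, rfl, rfl, rfl, rfl⟩) <;> omega
  rw [hset, Set.ncard_coe_finset, hF]
  rw [Finset.card_union_of_disjoint, Finset.card_image_of_injOn]
  · simp [Finset.card_range]
  · intro x _ y _ hxy
    exact congrArg (fun t => t.2.2.2.1) hxy
  · rw [Finset.disjoint_right]
    intro t ht ht'
    simp only [Finset.mem_image, Finset.mem_range] at ht'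
    obtain ⟨d, _, rfl⟩ := ht'
    simp at ht
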